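/- Let n ≥ 1 and let L : ℝⁿ → ℝ be three times continuously differentiable. Fix w ∈ ℝⁿ with (∂L/∂wᵢ)(w) · |wᵢ| = 0 for every i, and define the symmetric matrix H̃ by H̃ᵢⱼ = (∂²L/∂wᵢ∂wⱼ)(w) · |wᵢ| · |wⱼ|, i.e., H̃ = ∇²L(w) ⊙ (|w||w|ᵀ). Let p ∈ [1, ∞] and suppose there exists γ₀ ≠ 0 with γ₀ᵀ H̃ γ₀ ≥ 0 (H̃ is not negative definite). Then lim_{ρ → 0⁺} (2/ρ²) · sup { L(w + γ ⊙ |w|) − L(w) : ‖γ‖_p ≤ ρ } = sup_{γ ≠ 0} (γᵀ H̃ γ) / ‖γ‖_p². -/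

import Mathlib

open scoped ENNReal NNReal

open Filter

noncomputable def Amap {n : ℕ} (p : ℝ≥0∞) [Fact (1 ≤ p)] (w : Fin n → ℝ) :
    WithLp p (Fin n → ℝ) →L[ℝ] (Fin n → ℝ) :=
  LinearMap.toContinuousLinearMap
  { toFun := fun γ i => γ i * |w i|
    map_add' := fun x y => by funext i; exact add_mul _ _ _
    map_smul' := fun c x => by funext i; simp [mul_assoc] }

set_option maxHeartbeats 1000000 in
theorem worst_case_adaptive_sharpness_second_order
    (n : ℕ) (hn : 1 ≤ n) (L : (Fin n → ℝ) → ℝ) (hL : ContDiff ℝ 3 L)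
    (w : Fin n → ℝ)
    (hcrit : ∀ i, fderiv ℝ L w (Pi.single i 1) * |w i| = 0)
    (p : ℝ≥0∞) [Fact (1 ≤ p)]
    (hnotneg : ∃ γ₀ : Fin n → ℝ, γ₀ ≠ 0 ∧
      0 ≤ ∑ i, ∑ j, γ₀ i *
        (fderiv ℝ (fun x => fderiv ℝ L x (Pi.single j 1)) w (Pi.single i 1)
          * (|w i| * |w j|)) * γ₀ j) :
    Tendsto (fun ρ : ℝ => (2 / ρ ^ 2) *
        sSup {s : ℝ | ∃ γ : Fin n → ℝ,
          ‖(WithLp.equiv p (Fin n → ℝ)).symm γ‖ ≤ ρ ∧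
          s = L (w + fun i => γ i * |w i|) - L w})
      (nhdsWithin 0 (Set.Ioi 0))
      (nhds (sSup {r : ℝ | ∃ γ : Fin n → ℝ, γ ≠ 0 ∧
        r = (∑ i, ∑ j, γ i *
              (fderiv ℝ (fun x => fderiv ℝ L x (Pi.single j 1)) w (Pi.single i 1)
                * (|w i| * |w j|)) * γ j)
            / ‖(WithLp.equiv p (Fin n → ℝ)).symm γ‖ ^ 2})) := by
  classical
  have hdL : Differentiable ℝ L := hL.differentiable (by norm_num)
  have hdfL : Differentiable ℝ (fderiv ℝ L) :=
    (hL.fderiv_right (m := 2) (by norm_num)).differentiable (by norm_num)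
  set H := fderiv ℝ (fderiv ℝ L) w with hHdef
  have hH : HasFDerivAt (fderiv ℝ L) H w := (hdfL w).hasFDerivAt
  have hHsymm : ∀ u v, H u v = H v u := fun u v =>
    second_derivative_symmetric (fun y => (hdL y).hasFDerivAt) hH u v
  set A := Amap p w with hAdef
  -- Hessian entries
  have hentry : ∀ i j : Fin n,
      fderiv ℝ (fun x => fderiv ℝ L x (Pi.single j 1)) w (Pi.single i 1)
        = H (Pi.single i 1) (Pi.single j 1) := by
    intro i j
    rw [fderiv_clm_apply (hdfL w) (differentiableAt_const _)]
    simp [hHdef]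
  -- decomposition of A γ into single coordinates
  have hdec : ∀ γ : WithLp p (Fin n → ℝ),
      A γ = ∑ i, (γ i * |w i|) • (Pi.single i 1 : Fin n → ℝ) := by
    intro γ
    funext j
    simp [hAdef, Amap, Finset.sum_apply, Pi.single_apply, mul_ite, Finset.sum_ite_eq]
  -- the quadratic form as a sum
  have hsum : ∀ γ : Fin n → ℝ,
      (∑ i, ∑ j, γ i *
        (fderiv ℝ (fun x => fderiv ℝ L x (Pi.single j 1)) w (Pi.single i 1)
          * (|w i| * |w j|)) * γ j)
      = H (A ((WithLp.equiv p (Fin n → ℝ)).symm γ)) (A ((WithLp.equiv p (Fin n → ℝ)).symm γ)) := by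
    intro γ
    simp only [hentry]
    rw [hdec, map_sum]
    simp only [ContinuousLinearMap.coe_sum', Finset.sum_apply, map_sum, map_smul,
      ContinuousLinearMap.smul_apply, smul_eq_mul, Finset.mul_sum]
    rw [Finset.sum_comm]
    exact Finset.sum_congr rfl fun i _ => Finset.sum_congr rfl fun j _ => by
      simp only [WithLp.equiv_symm_apply, PiLp.toLp_apply]; ring
  -- the bilinear form B
  set B : WithLp p (Fin n → ℝ) →L[ℝ] WithLp p (Fin n → ℝ) →L[ℝ] ℝ :=
    ((ContinuousLinearMap.compL ℝ (WithLp p (Fin n → ℝ)) (Fin n → ℝ) ℝ).flip A).comp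
      (H.comp A) with hBdef
  have hBapp : ∀ u v, B u v = H (A u) (A v) := fun _ _ => rfl
  have hBsymm : ∀ u v, B u v = B v u := by
    intro u v; rw [hBapp, hBapp]; exact hHsymm _ _
  -- first derivative of F
  have hF : ∀ γ : WithLp p (Fin n → ℝ),
      HasFDerivAt (fun γ => L (w + A γ)) ((fderiv ℝ L (w + A γ)).comp A) γ := by
    intro γ
    exact ((hdL (w + A γ)).hasFDerivAt).comp γ (A.hasFDerivAt.const_add w)
  -- criticality : (fderiv L w) ∘ A = 0
  have hBzero : (fderiv ℝ L w).comp A = 0 := by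
    ext γ
    simp only [ContinuousLinearMap.comp_apply, ContinuousLinearMap.zero_apply]
    rw [hdec, map_sum]
    refine Finset.sum_eq_zero fun i _ => ?_
    rw [map_smul, smul_eq_mul]
    calc (γ i * |w i|) * fderiv ℝ L w (Pi.single i 1)
        = γ i * (fderiv ℝ L w (Pi.single i 1) * |w i|) := by ring
      _ = 0 := by rw [hcrit i, mul_zero]
  have hA0 : A (0 : WithLp p (Fin n → ℝ)) = 0 := map_zero _
  -- derivative of the halved quadratic form
  have hq' : ∀ γ : WithLp p (Fin n → ℝ),
      HasFDerivAt (fun x => (1/2 : ℝ) * B x x) (B γ) γ := by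
    intro γ
    have hb := (B.isBoundedBilinearMap).hasFDerivAt (γ, γ)
    have hd : HasFDerivAt (fun x : WithLp p (Fin n → ℝ) => (x, x))
        ((ContinuousLinearMap.id ℝ _).prod (ContinuousLinearMap.id ℝ _)) γ :=
      (hasFDerivAt_id γ).prodMk (hasFDerivAt_id γ)
    have h := HasFDerivAt.comp
      (g := fun q : WithLp p (Fin n → ℝ) × WithLp p (Fin n → ℝ) => B q.1 q.2)
      (f := fun x : WithLp p (Fin n → ℝ) => (x, x)) γ hb hd
    have h2 : HasFDerivAt (fun x : WithLp p (Fin n → ℝ) => B x x) (B γ + B.flip γ) γ := by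
      exact h
    have h3 := h2.const_mul (1/2 : ℝ)
    refine h3.congr_fderiv ?_
    ext v
    simp only [ContinuousLinearMap.smul_apply, ContinuousLinearMap.add_apply,
      ContinuousLinearMap.flip_apply, smul_eq_mul]
    rw [hBsymm v γ]
    ring
  -- derivative of G := F - q/2
  have hGderiv : ∀ γ : WithLp p (Fin n → ℝ),
      HasFDerivAt (fun x => L (w + A x) - (1/2 : ℝ) * B x x)
        ((fderiv ℝ L (w + A γ)).comp A - B γ) γ := fun γ => (hF γ).sub (hq' γ)
  -- bound on B
  have hBnorm : ∀ γ : WithLp p (Fin n → ℝ), B γ γ ≤ ‖B‖ * ‖γ‖ ^ 2 := by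
    intro γ
    calc B γ γ ≤ |B γ γ| := le_abs_self _
      _ = ‖B γ γ‖ := (Real.norm_eq_abs _).symm
      _ ≤ ‖B γ‖ * ‖γ‖ := (B γ).le_opNorm γ
      _ ≤ (‖B‖ * ‖γ‖) * ‖γ‖ := by gcongr; exact B.le_opNorm γ
      _ = ‖B‖ * ‖γ‖ ^ 2 := by ring
  have hmemS : ∀ (ρ : ℝ) (γ : WithLp p (Fin n → ℝ)), ‖γ‖ ≤ ρ →
      (L (w + A γ) - L w) ∈ {s : ℝ | ∃ γ' : Fin n → ℝ,
        ‖(WithLp.equiv p (Fin n → ℝ)).symm γ'‖ ≤ ρ ∧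
        s = L (w + fun i => γ' i * |w i|) - L w} := by
    intro ρ γ hγ
    exact ⟨WithLp.equiv p (Fin n → ℝ) γ, by simpa using hγ, rfl⟩
  have hSelem : ∀ (ρ s : ℝ), s ∈ {s : ℝ | ∃ γ' : Fin n → ℝ,
        ‖(WithLp.equiv p (Fin n → ℝ)).symm γ'‖ ≤ ρ ∧
        s = L (w + fun i => γ' i * |w i|) - L w} →
      ∃ γ : WithLp p (Fin n → ℝ), ‖γ‖ ≤ ρ ∧ s = L (w + A γ) - L w := by
    intro ρ s hs
    obtain ⟨γ, hγ, rfl⟩ := hs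
    exact ⟨(WithLp.equiv p (Fin n → ℝ)).symm γ, hγ, rfl⟩
  have hBcomp : ∀ x : WithLp p (Fin n → ℝ), B x = (H (A x)).comp A := fun _ => rfl
  clear hAdef hBdef hHdef
  clear_value B A H
  -- the target set
  set Tset := {r : ℝ | ∃ γ : Fin n → ℝ, γ ≠ 0 ∧
      r = (∑ i, ∑ j, γ i *
            (fderiv ℝ (fun x => fderiv ℝ L x (Pi.single j 1)) w (Pi.single i 1)
              * (|w i| * |w j|)) * γ j)
          / ‖(WithLp.equiv p (Fin n → ℝ)).symm γ‖ ^ 2} with hTsetdef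
  set T := sSup Tset with hTdef
  have hmemT : ∀ γ : WithLp p (Fin n → ℝ), γ ≠ 0 → (B γ γ / ‖γ‖ ^ 2) ∈ Tset := by
    intro γ hγ
    refine ⟨WithLp.equiv p (Fin n → ℝ) γ, ?_, ?_⟩
    · intro h
      apply hγ
      have := congrArg (WithLp.equiv p (Fin n → ℝ)).symm h
      simpa using this
    · rw [hsum]
      simp only [Equiv.symm_apply_apply]
      rw [hBapp]
  have hTbdd : BddAbove Tset := by
    refine ⟨‖B‖, fun r hr => ?_⟩
    obtain ⟨γ, hγ, rfl⟩ := hr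
    rw [hsum, ← hBapp]
    set γ' := (WithLp.equiv p (Fin n → ℝ)).symm γ with hγ'def
    have hγ'0 : γ' ≠ 0 := by
      intro h
      apply hγ
      have := congrArg (WithLp.equiv p (Fin n → ℝ)) h
      simpa [hγ'def] using this
    have hpos : (0:ℝ) < ‖γ'‖ ^ 2 := pow_pos (norm_pos_iff.mpr hγ'0) 2
    rw [div_le_iff₀ hpos]
    exact hBnorm γ'
  have hTne : Tset.Nonempty := by
    obtain ⟨γ₀, hγ₀, _⟩ := hnotneg
    exact ⟨_, γ₀, hγ₀, rfl⟩
  have hT0 : 0 ≤ T := by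
    obtain ⟨γ₀, hγ₀, hq0⟩ := hnotneg
    have hmem : _ ∈ Tset := ⟨γ₀, hγ₀, rfl⟩
    have hle := le_csSup hTbdd hmem
    refine le_trans ?_ hle
    exact div_nonneg hq0 (by positivity)
  have hqleT : ∀ γ : WithLp p (Fin n → ℝ), B γ γ ≤ T * ‖γ‖ ^ 2 := by
    intro γ
    by_cases hγ : γ = 0
    · subst hγ; simp
    · have hpos : (0:ℝ) < ‖γ‖ ^ 2 := pow_pos (norm_pos_iff.mpr hγ) 2
      have := le_csSup hTbdd (hmemT γ hγ)
      rw [div_le_iff₀ hpos] at this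
      linarith
  -- the little-o bound on the second-order remainder of fderiv L
  rw [Metric.tendsto_nhdsWithin_nhds]
  intro ε hε
  set κ := ε / 4 with hκdef
  have hκ : 0 < κ := by positivity
  have hC1 : (0:ℝ) < ‖A‖ + 1 := by positivity
  set ε' := κ / (‖A‖ + 1) ^ 2 with hε'def
  have hε' : 0 < ε' := by positivity
  have hlo := hH.isLittleO.def hε'
  rw [Metric.eventually_nhds_iff] at hlo
  obtain ⟨δ₁, hδ₁, hlo⟩ := hlo
  refine ⟨min (δ₁ / (‖A‖ + 1)) 1, by positivity, ?_⟩
  intro ρ hρ hρδ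
  rw [Real.dist_eq, sub_zero] at hρδ
  have hρ0 : 0 < ρ := hρ
  have hρabs : ρ < min (δ₁ / (‖A‖ + 1)) 1 := by rwa [abs_of_pos hρ0] at hρδ
  have hρδ₁ : ρ < δ₁ / (‖A‖ + 1) := lt_of_lt_of_le hρabs (min_le_left _ _)
  have hρ2 : (0:ℝ) < ρ ^ 2 := by positivity
  -- derivative norm bound on the ball
  have hDbound : ∀ x : WithLp p (Fin n → ℝ), ‖x‖ ≤ ρ →
      ‖(fderiv ℝ L (w + A x)).comp A - B x‖ ≤ κ * ρ := by
    intro x hx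
    have hAx : ‖A x‖ ≤ ‖A‖ * ρ := by
      calc ‖A x‖ ≤ ‖A‖ * ‖x‖ := A.le_opNorm x
        _ ≤ ‖A‖ * ρ := by gcongr
    have hAxδ : dist (w + A x) w < δ₁ := by
      rw [dist_eq_norm, add_sub_cancel_left]
      calc ‖A x‖ ≤ ‖A‖ * ρ := hAx
        _ ≤ (‖A‖ + 1) * ρ := mul_le_mul_of_nonneg_right (by linarith) hρ0.le
        _ < δ₁ := by
            rw [mul_comm]
            exact (lt_div_iff₀ hC1).mp hρδ₁
    have hlox := hlo hAxδ
    have heq : (fderiv ℝ L (w + A x)).comp A - B x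
        = (fderiv ℝ L (w + A x) - fderiv ℝ L w - H (A x)).comp A := by
      rw [ContinuousLinearMap.sub_comp, ContinuousLinearMap.sub_comp, hBzero, sub_zero, hBcomp]
    rw [heq]
    calc ‖(fderiv ℝ L (w + A x) - fderiv ℝ L w - H (A x)).comp A‖
        ≤ ‖fderiv ℝ L (w + A x) - fderiv ℝ L w - H (A x)‖ * ‖A‖ :=
          ContinuousLinearMap.opNorm_comp_le _ _
      _ ≤ (ε' * ‖A x‖) * ‖A‖ := by
          gcongr
          have := hlox
          simpa [add_sub_cancel_left] using this
      _ ≤ (ε' * (‖A‖ * ρ)) * ‖A‖ := by gcongr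
      _ ≤ (ε' * ((‖A‖ + 1) * ρ)) * (‖A‖ + 1) := by
          have hA1 : ‖A‖ ≤ ‖A‖ + 1 := by linarith
          gcongr
      _ = κ * ρ := by
          rw [hε'def]
          field_simp
  -- mean value bound on G
  have hGbound : ∀ γ : WithLp p (Fin n → ℝ), ‖γ‖ ≤ ρ →
      |L (w + A γ) - L w - (1/2 : ℝ) * B γ γ| ≤ κ * ρ ^ 2 := by
    intro γ hγ
    have hmvt := Convex.norm_image_sub_le_of_norm_hasFDerivWithin_le
      (f := fun x => L (w + A x) - (1/2 : ℝ) * B x x)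
      (f' := fun x => (fderiv ℝ L (w + A x)).comp A - B x)
      (s := Metric.closedBall (0 : WithLp p (Fin n → ℝ)) ρ) (C := κ * ρ)
      (fun x hx => (hGderiv x).hasFDerivWithinAt)
      (fun x hx => hDbound x (by simpa [Metric.mem_closedBall, dist_eq_norm] using hx))
      (convex_closedBall _ _)
      (Metric.mem_closedBall_self (le_of_lt hρ0))
      (by simpa [Metric.mem_closedBall, dist_eq_norm] using hγ)
    have h0 : L (w + A 0) - (1/2 : ℝ) * B 0 0 = L w := by
      rw [hA0, add_zero]; simp
    have hmvt' : ‖(L (w + A γ) - (1/2 : ℝ) * B γ γ) - L w‖ ≤ (κ * ρ) * ‖γ‖ := by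
      simpa [h0] using hmvt
    calc |L (w + A γ) - L w - (1/2 : ℝ) * B γ γ|
        = ‖(L (w + A γ) - (1/2 : ℝ) * B γ γ) - L w‖ := by rw [Real.norm_eq_abs]; ring_nf
      _ ≤ (κ * ρ) * ‖γ‖ := hmvt'
      _ ≤ (κ * ρ) * ρ := by gcongr
      _ = κ * ρ ^ 2 := by ring
  -- the sup set
  set S := {s : ℝ | ∃ γ : Fin n → ℝ,
      ‖(WithLp.equiv p (Fin n → ℝ)).symm γ‖ ≤ ρ ∧
      s = L (w + fun i => γ i * |w i|) - L w} with hSdef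
  -- upper bound on elements of S
  have hSub : ∀ s ∈ S, s ≤ (1/2) * T * ρ ^ 2 + κ * ρ ^ 2 := by
    intro s hs
    obtain ⟨γ, hγ, rfl⟩ := hSelem ρ s hs
    have h1 := hGbound γ hγ
    have h2 : B γ γ ≤ T * ρ ^ 2 := by
      calc B γ γ ≤ T * ‖γ‖ ^ 2 := hqleT γ
        _ ≤ T * ρ ^ 2 := by
            have : ‖γ‖ ^ 2 ≤ ρ ^ 2 := by
              apply pow_le_pow_left₀ (norm_nonneg _) hγ
            nlinarith
    rw [abs_le] at h1
    linarith [h1.2]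
  have hSbdd : BddAbove S := ⟨(1/2) * T * ρ ^ 2 + κ * ρ ^ 2, fun s hs => hSub s hs⟩
  -- lower bound : pick near-optimal direction
  have hTκ : T - κ < T := by linarith
  obtain ⟨r, hrmem, hrlt⟩ := exists_lt_of_lt_csSup hTne hTκ
  obtain ⟨γ₁, hγ₁0, hr⟩ := hrmem
  set γ₁' := (WithLp.equiv p (Fin n → ℝ)).symm γ₁ with hγ₁'def
  have hγ₁'0 : γ₁' ≠ 0 := by
    intro h
    apply hγ₁0
    have := congrArg (WithLp.equiv p (Fin n → ℝ)) h
    simpa [hγ₁'def] using this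
  have hγ₁n : (0:ℝ) < ‖γ₁'‖ := norm_pos_iff.mpr hγ₁'0
  have hrq : r = B γ₁' γ₁' / ‖γ₁'‖ ^ 2 := by rw [hr, hsum, hBapp]
  set u := (‖γ₁'‖⁻¹ : ℝ) • γ₁' with hudef
  have hu1 : ‖u‖ = 1 := by
    rw [hudef, norm_smul, norm_inv, Real.norm_eq_abs, abs_of_pos hγ₁n, inv_mul_cancel₀ (ne_of_gt hγ₁n)]
  have hBscale : ∀ (c : ℝ) (x : WithLp p (Fin n → ℝ)), B (c • x) (c • x) = c ^ 2 * B x x := by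
    intro c x
    simp only [map_smul, ContinuousLinearMap.smul_apply, smul_eq_mul]
    ring
  have hqu : B u u = r := by
    rw [hudef, hBscale, hrq, inv_pow, inv_mul_eq_div]
  -- lower bound on sSup S
  have hSlow : (1/2) * (T - κ) * ρ ^ 2 - κ * ρ ^ 2 ≤ sSup S := by
    have hmem : (L (w + A (ρ • u)) - L w) ∈ S := by
      apply hmemS
      rw [norm_smul, Real.norm_eq_abs, abs_of_pos hρ0, hu1, mul_one]

    have hle := le_csSup hSbdd hmem
    have hquρ : B (ρ • u) (ρ • u) = ρ ^ 2 * r := by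
      rw [hBscale, hqu]
    have hG := hGbound (ρ • u) (by rw [norm_smul, Real.norm_eq_abs, abs_of_pos hρ0, hu1, mul_one])
    rw [abs_le] at hG
    have h1 : L (w + A (ρ • u)) - L w ≥ (1/2) * (ρ ^ 2 * r) - κ * ρ ^ 2 := by
      have := hG.1
      rw [hquρ] at this
      linarith
    have h2 : (1/2) * (ρ ^ 2 * r) ≥ (1/2) * (ρ ^ 2 * (T - κ)) := by
      nlinarith [mul_nonneg hρ2.le (sub_nonneg.mpr hrlt.le)]
    linarith
  -- conclude
  have hSupUb : sSup S ≤ (1/2) * T * ρ ^ 2 + κ * ρ ^ 2 :=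
    Real.sSup_le hSub (by nlinarith [mul_nonneg hT0 hρ2.le, mul_nonneg hκ.le hρ2.le])
  clear_value S
  set M := sSup S with hMdef
  clear_value M
  rw [Real.dist_eq, abs_lt]
  have hmul : 2 / ρ ^ 2 * M ≤ T + 2 * κ := by
    rw [div_mul_eq_mul_div, div_le_iff₀ hρ2]
    linarith
  have hmul2 : T - 3 * κ ≤ 2 / ρ ^ 2 * M := by
    rw [div_mul_eq_mul_div, le_div_iff₀ hρ2]
    linarith
  constructor <;> linarith
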